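/- There exists an absolute constant p₀ ≥ 2 such that for all real p ≥ p₀, the Bell numbers satisfy B(p)^{1/p} ≤ (p/e)/(ln p − ln ln p) · exp(1/ln p − 1/p). -/
import Mathlib


open Real

noncomputable def Bell (p β : ℝ) : ℝ :=
  Real.exp (-β) * ∑' k : ℕ, (k : ℝ) ^ p * β ^ k / (Nat.factorial k)

lemma real_exp_tsum (x : ℝ) : ∑' n : ℕ, x ^ n / (Nat.factorial n) = Real.exp x := by
  rw [Real.exp_eq_exp_ℝ, NormedSpace.exp_eq_tsum_div]

theorem bell_one_upper : ∃ p₀ : ℝ, 2 ≤ p₀ ∧ ∀ p : ℝ, p₀ ≤ p →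
    Bell p 1 ^ (1 / p) ≤
      (p / Real.exp 1) / (Real.log p - Real.log (Real.log p)) *
        Real.exp (1 / Real.log p - 1 / p) := by
  refine ⟨3, by norm_num, fun p hp => ?_⟩
  have hp0 : (0:ℝ) < p := by linarith
  have hlp : 1 < Real.log p := by
    have h1 : Real.log 3 ≤ Real.log p := Real.log_le_log (by norm_num) hp
    have h3 : 1 < Real.log 3 := by
      rw [Real.lt_log_iff_exp_lt (by norm_num)]
      calc Real.exp 1 < 2.7182818286 := Real.exp_one_lt_d9
        _ < 3 := by norm_num
    linarith
  have hlp0 : 0 < Real.log p := by linarith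
  set L : ℝ := Real.log p - Real.log (Real.log p) with hLdef
  have hL0 : 0 < L := by
    have h := Real.log_le_sub_one_of_pos hlp0
    simp only [hLdef]; linarith
  have heL : Real.exp L = p / Real.log p := by
    rw [hLdef, Real.exp_sub, Real.exp_log hp0, Real.exp_log hlp0]
  set C : ℝ := Real.exp (p * (Real.log p - Real.log L - 1)) with hCdef
  -- pointwise bound
  have key : ∀ k : ℕ, (k : ℝ) ^ p ≤ C * Real.exp (L * k) := by
    intro k
    rcases Nat.eq_zero_or_pos k with hk | hk
    · subst hk
      simp only [Nat.cast_zero]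
      rw [Real.zero_rpow (ne_of_gt hp0)]
      positivity
    · have hx0 : (0:ℝ) < (k : ℝ) := by exact_mod_cast hk
      rw [Real.rpow_def_of_pos hx0, hCdef, ← Real.exp_add]
      apply Real.exp_le_exp.mpr
      have h1 : Real.log (L * k / p) ≤ L * k / p - 1 :=
        Real.log_le_sub_one_of_pos (by positivity)
      rw [Real.log_div (by positivity) (ne_of_gt hp0),
        Real.log_mul (ne_of_gt hL0) (ne_of_gt hx0)] at h1
      have h2 : Real.log ((k:ℝ)) ≤ Real.log p - Real.log L + L * k / p - 1 := by
        linarith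
      have h3 : p * Real.log ((k:ℝ)) ≤ p * (Real.log p - Real.log L + L * k / p - 1) :=
        mul_le_mul_of_nonneg_left h2 (le_of_lt hp0)
      have h4 : p * (L * k / p) = L * k := by field_simp
      nlinarith [h3, h4]
  -- summability
  have hg : Summable (fun k : ℕ => C * (Real.exp (L * k) / (Nat.factorial k))) := by
    have h := (Real.summable_pow_div_factorial (Real.exp L)).mul_left C
    refine h.congr fun k => ?_
    rw [← Real.exp_nat_mul]; ring_nf
  have hf : Summable (fun k : ℕ => (k : ℝ) ^ p * (1:ℝ) ^ k / (Nat.factorial k)) := by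
    apply Summable.of_nonneg_of_le (fun k => by positivity) _ hg
    intro k
    rw [one_pow, mul_one]
    have := key k
    have hfac : (0:ℝ) < (Nat.factorial k : ℝ) := by positivity
    rw [div_le_iff₀ hfac]
    calc (k:ℝ)^p ≤ C * Real.exp (L * k) := key k
      _ = C * (Real.exp (L * k) / (Nat.factorial k)) * (Nat.factorial k) := by
          field_simp
  -- tsum bound
  have htsum : (∑' k : ℕ, (k : ℝ) ^ p * (1:ℝ) ^ k / (Nat.factorial k)) ≤
      C * Real.exp (Real.exp L) := by
    have h1 : (∑' k : ℕ, (k : ℝ) ^ p * (1:ℝ) ^ k / (Nat.factorial k)) ≤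
        ∑' k : ℕ, C * (Real.exp (L * k) / (Nat.factorial k)) := by
      apply Summable.tsum_le_tsum _ hf hg
      intro k
      rw [one_pow, mul_one]
      have hfac : (0:ℝ) < (Nat.factorial k : ℝ) := by positivity
      rw [div_le_iff₀ hfac] at *
      calc (k:ℝ)^p ≤ C * Real.exp (L * k) := key k
        _ = C * (Real.exp (L * k) / (Nat.factorial k)) * (Nat.factorial k) := by
            field_simp
    have h2 : (∑' k : ℕ, C * (Real.exp (L * k) / (Nat.factorial k))) =
        C * Real.exp (Real.exp L) := by
      rw [tsum_mul_left]
      congr 1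
      rw [← real_exp_tsum (Real.exp L)]
      congr 1 with k
      rw [← Real.exp_nat_mul, mul_comm]
    linarith [h1, h2.le, h2.ge]
  -- Bell bound
  have hBell : Bell p 1 ≤ Real.exp (p * (Real.log p - Real.log L - 1) + Real.exp L - 1) := by
    unfold Bell
    calc Real.exp (-1) * ∑' k : ℕ, (k : ℝ) ^ p * (1:ℝ) ^ k / (Nat.factorial k)
        ≤ Real.exp (-1) * (C * Real.exp (Real.exp L)) := by
          apply mul_le_mul_of_nonneg_left htsum (Real.exp_pos _).le
      _ = Real.exp (p * (Real.log p - Real.log L - 1) + Real.exp L - 1) := by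
          rw [hCdef, ← Real.exp_add, ← Real.exp_add]; ring_nf
  have hBell0 : 0 ≤ Bell p 1 := by
    unfold Bell
    apply mul_nonneg (Real.exp_pos _).le
    apply tsum_nonneg
    intro k; positivity
  -- take rpow
  have hstep : Bell p 1 ^ (1 / p) ≤
      Real.exp ((p * (Real.log p - Real.log L - 1) + Real.exp L - 1) / p) := by
    have h := Real.rpow_le_rpow hBell0 hBell (by positivity : (0:ℝ) ≤ 1 / p)
    calc Bell p 1 ^ (1 / p)
        ≤ Real.exp (p * (Real.log p - Real.log L - 1) + Real.exp L - 1) ^ (1 / p) := h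
      _ = Real.exp ((p * (Real.log p - Real.log L - 1) + Real.exp L - 1) / p) := by
          rw [← Real.exp_mul]; ring_nf
  refine hstep.trans_eq ?_
  have hrhs : (p / Real.exp 1) / L * Real.exp (1 / Real.log p - 1 / p) =
      Real.exp (Real.log p - 1 - Real.log L + (1 / Real.log p - 1 / p)) := by
    rw [Real.exp_add, Real.exp_sub, Real.exp_sub, Real.exp_sub, Real.exp_log hp0,
      Real.exp_log hL0]
  rw [hrhs]
  congr 1
  rw [heL]
  field_simp
  ring
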